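/- Let 𝔽_q be the finite field with q elements and let g ∈ 𝔽_q[x]. Then both g and its formal derivative g′ are null polynomials on 𝔽_q if and only if (x^q − x)² divides g in 𝔽_q[x]. In other words, the ideal {g ∈ 𝔽_q[x] : g and g′ induce the zero function on 𝔽_q} equals the principal ideal generated by (x^q − x)². -/

import Mathlib

open Polynomial

lemma X_pow_card_sub_X_eq_prod (F : Type*) [Field F] [Fintype F] :
    (X ^ (Fintype.card F) - X : F[X]) = ∏ a : F, (X - C a) := by
  have hq1 : 1 < Fintype.card F := Fintype.one_lt_card
  have hmonic : (X ^ (Fintype.card F) - X : F[X]).Monic := by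
    exact monic_X_pow_sub (by rw [degree_X]; exact_mod_cast hq1)
  have hroots : (X ^ (Fintype.card F) - X : F[X]).roots = Finset.univ.val :=
    FiniteField.roots_X_pow_card_sub_X F
  have hcard : (X ^ (Fintype.card F) - X : F[X]).roots.card =
      (X ^ (Fintype.card F) - X : F[X]).natDegree := by
    rw [hroots, FiniteField.X_pow_card_sub_X_natDegree_eq F hq1]
    simp [Finset.card_univ]
  have h := prod_multiset_X_sub_C_of_monic_of_roots_card_eq hmonic hcard
  rw [← h, hroots]
  rfl

/-- **Example (null polynomials with null derivative over a finite field).**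
For the finite field `𝔽_q`, a polynomial `g ∈ 𝔽_q[x]` together with its formal
derivative `g'` induces the zero function on `𝔽_q` iff `(x^q - x)^2` divides
`g`. -/
theorem null_and_deriv_null_iff_sq_dvd (F : Type*) [Field F] [Fintype F]
    (q : ℕ) (hq : Fintype.card F = q) (g : F[X]) :
    ((∀ a : F, eval a g = 0) ∧ (∀ a : F, eval a (derivative g) = 0)) ↔
      (X ^ q - X) ^ 2 ∣ g := by
  subst hq
  rcases eq_or_ne g 0 with rfl | hg
  · simp
  have key : ∀ a : F, ((X - C a) ^ 2 ∣ g ↔ (g.IsRoot a ∧ (derivative g).IsRoot a)) := by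
    intro a
    rw [← Polynomial.le_rootMultiplicity_iff hg,
      show (2 : ℕ) = 1 + 1 from rfl, ← Nat.lt_iff_add_one_le,
      one_lt_rootMultiplicity_iff_isRoot hg]
  rw [X_pow_card_sub_X_eq_prod F, ← Finset.prod_pow]
  constructor
  · rintro ⟨h0, h1⟩
    refine Finset.prod_dvd_of_coprime ?_ (fun a _ ↦ (key a).2 ⟨h0 a, h1 a⟩)
    intro a _ b _ hab
    exact (pairwise_coprime_X_sub_C (Function.injective_id (α := F)) hab).pow
  · intro hdvd
    have hall : ∀ a : F, g.IsRoot a ∧ (derivative g).IsRoot a := fun a ↦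
      (key a).1 (dvd_trans (Finset.dvd_prod_of_mem (fun x ↦ (X - C x) ^ 2) (Finset.mem_univ a)) hdvd)
    exact ⟨fun a ↦ (hall a).1, fun a ↦ (hall a).2⟩
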